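/- For an odd positive integer t and p ∈ [1/2, 1], the tail sum ∑_{ℓ=(t+1)/2}^{t} C(t,ℓ) p^ℓ (1−p)^{t−ℓ} equals 1/2 + (1/2)·I_{4δ²}(1/2, (t+1)/2), where δ = p − 1/2 and I_x(a,b) is the regularized incomplete beta function. -/

import Mathlib

open Finset

/-- The regularized incomplete beta function `I_x(a,b)`. -/
noncomputable def regIncBeta (x a b : ℝ) : ℝ :=
  (∫ s in (0:ℝ)..x, s ^ (a - 1) * (1 - s) ^ (b - 1)) /
    (Real.Gamma a * Real.Gamma b / Real.Gamma (a + b))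

noncomputable def auxF (n : ℕ) (q : ℝ) (ℓ : ℕ) : ℝ :=
  (ℓ : ℝ) * (n.choose ℓ) * q ^ (ℓ-1) * (1-q) ^ (n-ℓ)

lemma tail_deriv (k : ℕ) (q : ℝ) :
    HasDerivAt (fun q : ℝ => ∑ ℓ ∈ Finset.Icc (k+1) (2*k+1),
        ((2*k+1).choose ℓ : ℝ) * q ^ ℓ * (1 - q) ^ (2*k+1-ℓ))
      ((2*k+1) * ((2*k).choose k) * (q*(1-q))^k) q := by
  set n := 2*k+1 with hn
  have hterm : ∀ ℓ ∈ Finset.Icc (k+1) n, HasDerivAt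
      (fun q : ℝ => ((n.choose ℓ : ℝ)) * q ^ ℓ * (1 - q) ^ (n-ℓ))
      (auxF n q ℓ - auxF n q (ℓ+1)) q := by
    intro ℓ hℓ
    have h2 : HasDerivAt (fun q : ℝ => (1-q) ^ (n-ℓ))
        (-(((n-ℓ : ℕ) : ℝ) * (1-q) ^ (n-ℓ-1))) q := by
      have := (hasDerivAt_pow (n-ℓ) (1-q)).comp q
        (((hasDerivAt_id q).const_sub (1:ℝ)))
      simpa [mul_comm, mul_assoc, Function.comp_def] using this
    have h1 := (hasDerivAt_pow ℓ q).mul h2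
    have h := h1.const_mul ((n.choose ℓ : ℝ))
    have hmul : ∀ y : ℝ, (n.choose ℓ : ℝ) * (y ^ ℓ * (1-y) ^ (n-ℓ))
        = (n.choose ℓ : ℝ) * y ^ ℓ * (1-y) ^ (n-ℓ) := fun y => by ring
    simp only [Pi.mul_apply, hmul] at h
    refine h.congr_deriv (Eq.symm ?_)
    have hc : ((n.choose (ℓ+1) * (ℓ+1) : ℕ) : ℝ) = ((n.choose ℓ : ℕ) : ℝ) * ((n-ℓ : ℕ) : ℝ) := by
      rw [Nat.choose_succ_right_eq n ℓ]; push_cast; ring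
    push_cast at hc
    simp only [auxF]
    have e1 : (ℓ+1) - 1 = ℓ := by omega
    have e2 : n - (ℓ+1) = n - ℓ - 1 := by omega
    rw [e1, e2]
    push_cast
    linear_combination (-(q^ℓ) * (1-q)^(n-ℓ-1)) * hc
  have hsum := HasDerivAt.fun_sum hterm
  have htel : ∑ ℓ ∈ Finset.Icc (k+1) n, (auxF n q ℓ - auxF n q (ℓ+1))
      = auxF n q (k+1) - auxF n q (2*k+2) := by
    rw [← Finset.Ico_add_one_right_eq_Icc, Finset.sum_Ico_eq_sum_range,
      show n+1-(k+1) = k+1 from by omega,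
      show (2*k+2) = k+1+(k+1) from by omega]
    exact Finset.sum_range_sub' (fun i => auxF n q (k+1+i)) (k+1)
  rw [htel] at hsum
  have hz : auxF n q (2*k+2) = 0 := by
    simp [auxF, Nat.choose_eq_zero_of_lt (by omega : n < 2*k+2)]
  have hv : auxF n q (k+1) = (2*k+1) * ((2*k).choose k) * (q*(1-q))^k := by
    simp only [auxF]
    have e1 : k+1-1 = k := by omega
    have e2 : n - (k+1) = k := by omega
    rw [e1, e2, mul_pow]
    have hc : (((k+1) * n.choose (k+1) : ℕ) : ℝ) = (((2*k+1) * ((2*k).choose k) : ℕ) : ℝ) := by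
      congr 1
      rw [mul_comm (k+1) _]
      exact (Nat.add_one_mul_choose_eq (2*k) k).symm
    push_cast at hc
    push_cast
    linear_combination (q^k * (1-q)^k) * hc
  rw [hz, hv, sub_zero] at hsum
  exact hsum
lemma poly_deriv (k : ℕ) (q : ℝ) :
    HasDerivAt (fun q : ℝ => ∑ j ∈ Finset.range (k+1),
        (k.choose j : ℝ) * (1/4) ^ (k-j) * (-1) ^ j * (q - 1/2) ^ (2*j+1) / (2*j+1))
      ((q*(1-q))^k) q := by
  have hterm : ∀ j ∈ Finset.range (k+1), HasDerivAt
      (fun q : ℝ => (k.choose j : ℝ) * (1/4) ^ (k-j) * (-1) ^ j * (q - 1/2) ^ (2*j+1) / (2*j+1))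
      ((k.choose j : ℝ) * (1/4) ^ (k-j) * (-1) ^ j * (q - 1/2) ^ (2*j)) q := by
    intro j _
    have h1 : HasDerivAt (fun q : ℝ => (q - 1/2) ^ (2*j+1))
        (((2*j+1 : ℕ) : ℝ) * (q - 1/2) ^ (2*j)) q := by
      have := (hasDerivAt_pow (2*j+1) (q - 1/2)).comp q ((hasDerivAt_id q).sub_const (1/2))
      simpa [Function.comp_def] using this
    have h := (h1.const_mul ((k.choose j : ℝ) * (1/4) ^ (k-j) * (-1) ^ j)).div_const ((2*j+1 : ℝ))
    have h2j : ((2*j+1 : ℕ) : ℝ) = (2*(j:ℝ)+1) := by push_cast; ring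
    refine h.congr_deriv (Eq.symm ?_)
    rw [h2j]
    have : (2*(j:ℝ)+1) ≠ 0 := by positivity
    field_simp
  have hsum := HasDerivAt.fun_sum hterm
  refine hsum.congr_deriv (Eq.symm ?_)
  have : q * (1-q) = (-(q - 1/2)^2) + (1/4 : ℝ) := by ring
  rw [this, add_pow]
  refine Finset.sum_congr rfl fun j hj => ?_
  rw [neg_pow, ← pow_mul]
  ring
lemma choose_upper_half (k : ℕ) :
    ∑ ℓ ∈ Finset.Icc (k+1) (2*k+1), (2*k+1).choose ℓ = 4 ^ k := by
  have h1 : ∑ ℓ ∈ Finset.range (k+1), (2*k+1).choose ℓ = 4 ^ k :=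
    Nat.sum_range_choose_halfway k
  have h2 : ∑ ℓ ∈ Finset.range (2*k+2), (2*k+1).choose ℓ = 2 ^ (2*k+1) := by
    simpa using Nat.sum_range_choose (2*k+1)
  have h3 : ∑ ℓ ∈ Finset.range (k+1), (2*k+1).choose ℓ
      + ∑ ℓ ∈ Finset.Icc (k+1) (2*k+1), (2*k+1).choose ℓ
      = ∑ ℓ ∈ Finset.range (2*k+2), (2*k+1).choose ℓ := by
    rw [← Finset.Ico_add_one_right_eq_Icc, Finset.range_eq_Ico, Finset.range_eq_Ico]
    exact Finset.sum_Ico_consecutive (fun ℓ => (2*k+1).choose ℓ) (m := 0) (n := k+1) (k := 2*k+1+1) (by omega) (by omega)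
  have : 2 ^ (2*k+1) = 4 ^ k + 4 ^ k := by
    rw [pow_succ', pow_mul]; ring
  omega
lemma tailA (k : ℕ) (p : ℝ) :
    ∑ ℓ ∈ Finset.Icc (k+1) (2*k+1), ((2*k+1).choose ℓ : ℝ) * p ^ ℓ * (1 - p) ^ (2*k+1-ℓ)
      = 1/2 + ((2*k+1) * ((2*k).choose k) : ℝ) *
        ∑ j ∈ Finset.range (k+1),
          (k.choose j : ℝ) * (1/4) ^ (k-j) * (-1) ^ j * (p - 1/2) ^ (2*j+1) / (2*j+1) := by
  set c : ℝ := ((2*k+1) * ((2*k).choose k) : ℝ) with hc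
  set g : ℝ → ℝ := fun q => (∑ ℓ ∈ Finset.Icc (k+1) (2*k+1),
      ((2*k+1).choose ℓ : ℝ) * q ^ ℓ * (1 - q) ^ (2*k+1-ℓ))
    - c * ∑ j ∈ Finset.range (k+1),
        (k.choose j : ℝ) * (1/4) ^ (k-j) * (-1) ^ j * (q - 1/2) ^ (2*j+1) / (2*j+1) with hg
  have hd : ∀ q : ℝ, HasDerivAt g 0 q := by
    intro q
    have h := (tail_deriv k q).sub ((poly_deriv k q).const_mul c)
    refine h.congr_deriv (Eq.symm ?_)
    rw [hc]; ring
  have hconst : g p = g (1/2) :=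
    is_const_of_deriv_eq_zero (fun x => (hd x).differentiableAt)
      (fun x => (hd x).deriv) p (1/2)
  have hP0 : (∑ j ∈ Finset.range (k+1),
      (k.choose j : ℝ) * (1/4) ^ (k-j) * (-1) ^ j * ((1:ℝ)/2 - 1/2) ^ (2*j+1) / (2*j+1)) = 0 := by
    refine Finset.sum_eq_zero fun j _ => ?_
    rw [sub_self, zero_pow (by omega : 2*j+1 ≠ 0)]
    ring
  have hS0 : (∑ ℓ ∈ Finset.Icc (k+1) (2*k+1),
      ((2*k+1).choose ℓ : ℝ) * (1/2 : ℝ) ^ ℓ * (1 - 1/2) ^ (2*k+1-ℓ)) = 1/2 := by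
    have heach : ∀ ℓ ∈ Finset.Icc (k+1) (2*k+1),
        ((2*k+1).choose ℓ : ℝ) * (1/2 : ℝ) ^ ℓ * (1 - 1/2) ^ (2*k+1-ℓ)
        = ((2*k+1).choose ℓ : ℝ) * (1/2) ^ (2*k+1) := by
      intro ℓ hℓ
      simp only [Finset.mem_Icc] at hℓ
      rw [show (1 - 1/2 : ℝ) = 1/2 by norm_num, mul_assoc, ← pow_add,
        show ℓ + (2*k+1-ℓ) = 2*k+1 from by omega]
    rw [Finset.sum_congr rfl heach, ← Finset.sum_mul, ← Nat.cast_sum, choose_upper_half]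
    push_cast
    rw [show (4:ℝ)^k = 2^(2*k) from by rw [pow_mul]; norm_num,
      div_pow, one_pow, pow_succ]
    have h2 : (2:ℝ)^(2*k) ≠ 0 := by positivity
    field_simp
  have : g (1/2) = 1/2 := by
    rw [hg]
    simp only
    rw [hS0, hP0, mul_zero, sub_zero]
  have hgp := hconst.trans this
  rw [hg] at hgp
  simp only at hgp
  linarith [hgp]
lemma intB (k : ℕ) (d : ℝ) (hd : 0 ≤ d) :
    (∫ s in (0:ℝ)..(4*d^2), s ^ ((1:ℝ)/2 - 1) * (1 - s) ^ ((k:ℝ)))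
      = ∑ j ∈ Finset.range (k+1),
          (k.choose j : ℝ) * (-1) ^ j * ((2*d) ^ (2*j+1) / ((j:ℝ) + 1/2)) := by
  set x : ℝ := 4*d^2 with hx
  have hx0 : (0:ℝ) ≤ x := by positivity
  -- rewrite integrand on the interval
  have hcong : Set.EqOn
      (fun s : ℝ => s ^ ((1:ℝ)/2 - 1) * (1 - s) ^ ((k:ℝ)))
      (fun s : ℝ => ∑ j ∈ Finset.range (k+1),
          (k.choose j : ℝ) * (-1) ^ j * s ^ ((j:ℝ) - 1/2))
      (Set.uIcc 0 x) := by
    intro s hs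
    rw [Set.uIcc_of_le hx0] at hs
    have hs0 : 0 ≤ s := hs.1
    simp only
    rw [Real.rpow_natCast, show (1 - s : ℝ) = -s + 1 by ring, add_pow, Finset.mul_sum]
    refine Finset.sum_congr rfl fun j hj => ?_
    rw [show ((j:ℝ) - 1/2) = ((1:ℝ)/2 - 1) + (j:ℝ) by ring,
      Real.rpow_add' hs0 (by
        intro h
        have h2 : ((2*j : ℕ) : ℝ) = 1 := by push_cast; linarith
        have : (2*j : ℕ) = 1 := by exact_mod_cast h2
        omega), Real.rpow_natCast, neg_pow, one_pow]
    ring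
  rw [intervalIntegral.integral_congr hcong]
  rw [intervalIntegral.integral_finset_sum]
  swap
  · intro j hj
    exact (intervalIntegral.intervalIntegrable_rpow' (by
        have : (0:ℝ) ≤ (j:ℝ) := Nat.cast_nonneg j
        linarith : (-1:ℝ) < (j:ℝ) - 1/2)).const_mul _
  refine Finset.sum_congr rfl fun j hj => ?_
  rw [intervalIntegral.integral_const_mul]
  congr 1
  rw [integral_rpow (Or.inl (by
    have : (0:ℝ) ≤ (j:ℝ) := Nat.cast_nonneg j
    linarith))]
  rw [show ((j:ℝ) - 1/2 + 1) = (j:ℝ) + 1/2 by ring,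
    Real.zero_rpow (by positivity : ((j:ℝ) + 1/2) ≠ 0), sub_zero]
  congr 1
  rw [hx, show (4*d^2 : ℝ) = (2*d)^2 by ring, ← Real.rpow_natCast (2*d) 2,
    ← Real.rpow_mul (by linarith : (0:ℝ) ≤ 2*d),
    show ((2:ℕ):ℝ) * ((j:ℝ) + 1/2) = ((2*j+1 : ℕ) : ℝ) by push_cast; ring,
    Real.rpow_natCast]
lemma Bval (k : ℕ) :
    Real.Gamma (1/2) * Real.Gamma ((k:ℝ)+1) / Real.Gamma (1/2 + ((k:ℝ)+1))
      = (k.factorial : ℝ)^2 * 2^(2*k+1) / ((2*k+1).factorial : ℝ) := by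
  have hdup := Real.Gamma_mul_Gamma_add_half ((k:ℝ)+1)
  rw [Real.Gamma_nat_eq_factorial,
    show (2*((k:ℝ)+1)) = ((2*k+1:ℕ):ℝ)+1 by push_cast; ring,
    Real.Gamma_nat_eq_factorial,
    show (1 - (((2*k+1:ℕ):ℝ)+1)) = -(((2*k+1:ℕ):ℝ)) by ring,
    Real.rpow_neg (by norm_num : (0:ℝ) ≤ 2), Real.rpow_natCast] at hdup
  rw [Real.Gamma_one_half_eq, Real.Gamma_nat_eq_factorial,
    show (1/2 + ((k:ℝ)+1)) = (k:ℝ)+1+1/2 by ring]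
  have hΓpos : 0 < Real.Gamma ((k:ℝ)+1+1/2) :=
    Real.Gamma_pos_of_pos (by positivity)
  have hπ : 0 < Real.sqrt Real.pi := Real.sqrt_pos.mpr Real.pi_pos
  have hk : (0:ℝ) < (k.factorial : ℝ) := by exact_mod_cast k.factorial_pos
  have h2k : (0:ℝ) < ((2*k+1).factorial : ℝ) := by exact_mod_cast (2*k+1).factorial_pos
  have h2 : (0:ℝ) < (2:ℝ)^(2*k+1) := by positivity
  field_simp at hdup ⊢
  nlinarith [hdup, hΓpos, hπ, hk, h2k, h2, mul_pos hπ hk]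
theorem binomial_tail_eq_regIncBeta_odd (t : ℕ) (ht : 0 < t) (hodd : Odd t)
    (p : ℝ) (hp : 1 / 2 ≤ p) (hp1 : p ≤ 1) :
    ∑ ℓ ∈ Finset.Icc ((t + 1) / 2) t,
        (Nat.choose t ℓ : ℝ) * p ^ ℓ * (1 - p) ^ (t - ℓ)
      = 1 / 2 + (1 / 2) * regIncBeta (4 * (p - 1 / 2) ^ 2) (1 / 2) (((t : ℝ) + 1) / 2) := by
  obtain ⟨k, hk⟩ := hodd
  subst hk
  rw [show (2*k+1+1)/2 = k+1 from by omega]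
  rw [tailA k p]
  congr 1
  rw [regIncBeta,
    show (((2*k+1 : ℕ) : ℝ) + 1)/2 = (k:ℝ)+1 from by push_cast; ring,
    show ((1:ℝ)/2 - 1) = ((1:ℝ)/2 - 1) from rfl,
    show ((k:ℝ)+1) - 1 = (k:ℝ) from by ring,
    Bval k, intB k (p - 1/2) (by linarith)]
  rw [Finset.sum_div, Finset.mul_sum, Finset.mul_sum]
  refine Finset.sum_congr rfl fun j hj => ?_
  have hjk : j ≤ k := by simpa [Nat.lt_succ_iff] using hj
  have hcb' := Nat.choose_mul_factorial_mul_factorial (show k ≤ 2*k by omega)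
  rw [show 2*k - k = k from by omega] at hcb'
  have hcb : (((2*k).choose k : ℕ) : ℝ) * (k.factorial : ℝ) * (k.factorial : ℝ)
      = ((2*k).factorial : ℝ) := by exact_mod_cast congrArg (Nat.cast (R := ℝ)) hcb'
  have h2k1 : (((2*k+1).factorial : ℕ) : ℝ) = (2*(k:ℝ)+1) * ((2*k).factorial : ℝ) := by
    rw [show (2*k+1) = (2*k) + 1 from rfl, Nat.factorial_succ]
    push_cast; ring
  have hpow : (4:ℝ)^(k-j) * 4^j = 4^k := by
    rw [← pow_add, Nat.sub_add_cancel hjk]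
  have h2j : (2:ℝ)^(2*j+1) = 2 * 4^j := by
    rw [pow_succ, pow_mul]; norm_num; ring
  have h2kp : (2:ℝ)^(2*k+1) = 2 * 4^k := by
    rw [pow_succ, pow_mul]; norm_num; ring
  have hne1 : (2*(j:ℝ)+1) ≠ 0 := by positivity
  have hne2 : ((j:ℝ)+1/2) ≠ 0 := by positivity
  have hne3 : ((4:ℝ)^(k-j)) ≠ 0 := by positivity
  have hne4 : ((4:ℝ)^j) ≠ 0 := by positivity
  have hne5 : (k.factorial : ℝ) ≠ 0 := by
    exact_mod_cast k.factorial_pos.ne'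
  have hne6 : ((2*k).factorial : ℝ) ≠ 0 := by
    exact_mod_cast (2*k).factorial_pos.ne'
  have h4kj : (4:ℝ)^(k-j) = 4^k / 4^j := by
    rw [eq_div_iff hne4, hpow]
  have hq : ((1:ℝ)/4)^(k-j) = 4^j / 4^k := by
    rw [div_pow, one_pow, h4kj, one_div_div]
  rw [mul_pow (2:ℝ) (p - 1/2) (2*j+1), h2j, h2kp, h2k1, hq]
  rw [← hcb]
  have hne7 : ((4:ℝ)^k) ≠ 0 := by positivity
  generalize (p - (1:ℝ)/2)^(2*j+1) = Z
  generalize ((-1:ℝ))^j = E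
  generalize hFj : (4:ℝ)^j = Fj at hne4 ⊢
  generalize hFk : (4:ℝ)^k = Fk at hne7 ⊢
  field_simp
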